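/- Let σ_x, σ_y > 0 and ρ ∈ (−1, 1). Let f_{XY}(x,y) = 1/(2π σ_x σ_y √(1−ρ²)) · exp(−(1/(2(1−ρ²)))(x²/σ_x² − 2ρxy/(σ_x σ_y) + y²/σ_y²)) be the centered bivariate normal density with correlation ρ, and let f_X(x) = (σ_x√(2π))^{−1} exp(−x²/(2σ_x²)) and f_Y(y) = (σ_y√(2π))^{−1} exp(−y²/(2σ_y²)) be its marginals. Then ∫∫_{ℝ²} √(f_{XY}(x,y) · f_X(x) · f_Y(y)) dx dy = (1−ρ²)^{1/4} / (1 − ρ²/4)^{1/2}. -/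

import Mathlib

open MeasureTheory

set_option maxHeartbeats 2000000 in
/-- For a centered bivariate normal density with standard deviations
`σx, σy` and correlation `ρ`, the Bhattacharyya coefficient between the joint
density and the product of its marginals equals
`(1−ρ²)^{1/4} / (1−ρ²/4)^{1/2}`. -/
theorem bhattacharyya_coeff_bivariate_normal
    (σx σy ρ : ℝ) (hσx : 0 < σx) (hσy : 0 < σy) (hρ : ρ ∈ Set.Ioo (-1 : ℝ) 1)
    (fXY : ℝ × ℝ → ℝ) (fX fY : ℝ → ℝ)
    (hfXY : ∀ x y, fXY (x, y) =
      1 / (2 * Real.pi * σx * σy * Real.sqrt (1 - ρ ^ 2)) *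
        Real.exp (-(1 / (2 * (1 - ρ ^ 2))) *
          (x ^ 2 / σx ^ 2 - 2 * ρ * x * y / (σx * σy) + y ^ 2 / σy ^ 2)))
    (hfX : ∀ x, fX x = (σx * Real.sqrt (2 * Real.pi))⁻¹ *
      Real.exp (-x ^ 2 / (2 * σx ^ 2)))
    (hfY : ∀ y, fY y = (σy * Real.sqrt (2 * Real.pi))⁻¹ *
      Real.exp (-y ^ 2 / (2 * σy ^ 2))) :
    ∫ p : ℝ × ℝ, Real.sqrt (fXY p * fX p.1 * fY p.2)
      = (1 - ρ ^ 2) ^ ((1 : ℝ) / 4) / (1 - ρ ^ 2 / 4) ^ ((1 : ℝ) / 2) := by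
  obtain ⟨hρ1, hρ2⟩ := hρ
  have hr2 : (0:ℝ) < 1 - ρ ^ 2 := by nlinarith
  have h2ρ : (0:ℝ) < 2 - ρ ^ 2 := by nlinarith
  have h4ρ : (0:ℝ) < 4 - ρ ^ 2 := by nlinarith
  have hπ : (0:ℝ) < Real.pi := Real.pi_pos
  have hs : Real.sqrt (1 - ρ^2) * Real.sqrt (1 - ρ^2) = 1 - ρ^2 :=
    Real.mul_self_sqrt hr2.le
  have hspos : 0 < Real.sqrt (1 - ρ^2) := Real.sqrt_pos.2 hr2
  set a : ℝ := (4 - ρ^2) / (4 * σx^2 * (2 - ρ^2)) with ha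
  set c : ℝ := (2 - ρ^2) / (4 * (1 - ρ^2) * σy^2) with hc
  set m : ℝ := ρ * σy / ((2 - ρ^2) * σx) with hm
  set K : ℝ := 1 / (4 * Real.pi^2 * σx^2 * σy^2 * Real.sqrt (1 - ρ^2)) with hK
  have hapos : 0 < a := div_pos h4ρ (by positivity)
  have hcpos : 0 < c := div_pos h2ρ (by positivity)
  have hKpos : 0 < K := by positivity
  -- pointwise identity
  have hpt : ∀ p : ℝ × ℝ, Real.sqrt (fXY p * fX p.1 * fY p.2)
      = Real.sqrt K * (Real.exp (-(a * p.1^2)) * Real.exp (-(c * (p.2 - m * p.1)^2))) := by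
    rintro ⟨x, y⟩
    have hsq : Real.sqrt (2*Real.pi) * Real.sqrt (2*Real.pi) = 2*Real.pi :=
      Real.mul_self_sqrt (by positivity)
    have h1 : fXY (x, y) * fX x * fY y = K * Real.exp
        (-(1 / (2 * (1 - ρ ^ 2))) *
          (x ^ 2 / σx ^ 2 - 2 * ρ * x * y / (σx * σy) + y ^ 2 / σy ^ 2)
         + (-x ^ 2 / (2 * σx ^ 2) + -y ^ 2 / (2 * σy ^ 2))) := by
      rw [hfXY, hfX, hfY, Real.exp_add, Real.exp_add, hK]
      field_simp
      ring_nf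
      rw [Real.sq_sqrt (by positivity : (0:ℝ) ≤ Real.pi * 2)]
      ring
    rw [h1, Real.sqrt_mul hKpos.le, ← Real.exp_half, ← Real.exp_add]
    congr 1
    rw [hm, ha, hc]
    field_simp
    congr 1
    field_simp [hr2.ne', h2ρ.ne']
    ring
  -- the Gaussian integrals
  have hgauss_c : ∀ x : ℝ, (∫ y : ℝ, Real.exp (-(c * (y - m*x)^2)))
      = Real.sqrt (Real.pi / c) := by
    intro x
    rw [MeasureTheory.integral_sub_right_eq_self (fun t => Real.exp (-(c * t^2))) (m*x)]
    simpa [neg_mul] using integral_gaussian c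
  have hint_c : Integrable (fun y : ℝ => Real.exp (-(c * y^2))) := by
    simpa [neg_mul] using integrable_exp_neg_mul_sq hcpos
  have hint_a : Integrable (fun x : ℝ => Real.exp (-(a * x^2))) := by
    simpa [neg_mul] using integrable_exp_neg_mul_sq hapos
  set g : ℝ × ℝ → ℝ :=
    fun p => Real.exp (-(a * p.1^2)) * Real.exp (-(c * (p.2 - m * p.1)^2)) with hg
  have hgmeas : AEStronglyMeasurable g (volume.prod volume) := by
    rw [← MeasureTheory.Measure.volume_eq_prod]
    exact (by fun_prop : Continuous g).aestronglyMeasurable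
  have hgint : Integrable g (volume.prod volume) := by
    rw [MeasureTheory.integrable_prod_iff hgmeas]
    constructor
    · refine Filter.Eventually.of_forall fun x => ?_
      simpa [hg] using (hint_c.comp_sub_right (m*x)).const_mul (Real.exp (-(a * x^2)))
    · have : (fun x : ℝ => ∫ y : ℝ, ‖g (x, y)‖)
          = fun x : ℝ => Real.exp (-(a * x^2)) * Real.sqrt (Real.pi / c) := by
        funext x
        have : ∀ y : ℝ, ‖g (x, y)‖ = Real.exp (-(a * x^2)) * Real.exp (-(c * (y - m*x)^2)) := by
          intro y
          rw [hg]
          simp [abs_of_pos, Real.exp_pos, (Real.exp_pos _).le, abs_of_nonneg,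
            mul_nonneg (Real.exp_pos _).le (Real.exp_pos _).le]
        simp only [this]
        rw [MeasureTheory.integral_const_mul, hgauss_c x]
      rw [this]
      exact hint_a.mul_const _
  have hval : (∫ p : ℝ × ℝ, g p) = Real.sqrt (Real.pi / a) * Real.sqrt (Real.pi / c) := by
    rw [MeasureTheory.Measure.volume_eq_prod, MeasureTheory.integral_prod _ hgint]
    have : ∀ x : ℝ, (∫ y : ℝ, g (x, y)) = Real.exp (-(a * x^2)) * Real.sqrt (Real.pi / c) := by
      intro x
      simp only [hg]
      rw [MeasureTheory.integral_const_mul, hgauss_c x]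
    simp only [this]
    rw [MeasureTheory.integral_mul_const]
    congr 1
    simpa [neg_mul] using integral_gaussian a
  calc ∫ p : ℝ × ℝ, Real.sqrt (fXY p * fX p.1 * fY p.2)
      = ∫ p : ℝ × ℝ, Real.sqrt K * g p := by
        refine integral_congr_ae (Filter.Eventually.of_forall fun p => ?_)
        simpa [hg] using hpt p
    _ = Real.sqrt K * ∫ p : ℝ × ℝ, g p := MeasureTheory.integral_const_mul _ _
    _ = Real.sqrt K * (Real.sqrt (Real.pi / a) * Real.sqrt (Real.pi / c)) := by rw [hval]
    _ = (1 - ρ ^ 2) ^ ((1 : ℝ) / 4) / (1 - ρ ^ 2 / 4) ^ ((1 : ℝ) / 2) := by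
        have h14 : (1 - ρ ^ 2) ^ ((1 : ℝ) / 4) = Real.sqrt (Real.sqrt (1 - ρ^2)) := by
          rw [Real.sqrt_eq_rpow, Real.sqrt_eq_rpow, ← Real.rpow_mul hr2.le]
          norm_num
        have h12 : (1 - ρ ^ 2 / 4) ^ ((1 : ℝ) / 2) = Real.sqrt (1 - ρ^2/4) := by
          rw [Real.sqrt_eq_rpow]
        rw [h14, h12, ← Real.sqrt_mul (le_of_lt (div_pos hπ hapos)),
          ← Real.sqrt_mul hKpos.le, ← Real.sqrt_div (Real.sqrt_nonneg _)]
        congr 1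
        rw [hK, ha, hc]
        have h14' : (0:ℝ) < 1 - ρ^2/4 := by nlinarith
        field_simp
        rw [Real.sq_sqrt hr2.le]
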